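/- Let A, B : ℂ^n × ℂ^n → ℂ be bilinear forms. There exists a homeomorphism φ : ℂ^n → ℂ^n such that A(u,v) = B(φ u, φ v) for all u, v ∈ ℂ^n if and only if there exists a linear bijection ψ : ℂ^n → ℂ^n such that A(u,v) = B(ψ u, ψ v) for all u, v ∈ ℂ^n. -/

import Mathlib

set_option maxHeartbeats 1000000
set_option synthInstance.maxHeartbeats 400000

/-- Two bilinear forms `A, B : ℂ^n × ℂ^n → ℂ` are topologically equivalent
(via a homeomorphism `φ`) if and only if they are equivalent
(via a linear bijection `ψ`). -/
theorem stmt_1 (n : ℕ)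
    (A B : (Fin n → ℂ) →ₗ[ℂ] (Fin n → ℂ) →ₗ[ℂ] ℂ) :
    (∃ φ : (Fin n → ℂ) ≃ₜ (Fin n → ℂ), ∀ u v, A u v = B (φ u) (φ v)) ↔
    (∃ ψ : (Fin n → ℂ) ≃ₗ[ℂ] (Fin n → ℂ), ∀ u v, A u v = B (ψ u) (ψ v)) := by
  constructor
  · rintro ⟨φ, hφ⟩
    set E := Fin n → ℂ with hE
    -- N = left kernel ∩ right kernel of B
    set N : Submodule ℂ E := LinearMap.ker B ⊓ LinearMap.ker B.flip with hNdef
    have hNmem : ∀ x : E, x ∈ N ↔ (∀ w, B x w = 0) ∧ (∀ w, B w x = 0) := by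
      intro x
      simp only [hNdef, Submodule.mem_inf, LinearMap.mem_ker]
      constructor
      · rintro ⟨h1, h2⟩
        exact ⟨fun w => by rw [h1]; rfl, fun w => by
          have := congrArg (fun f : E →ₗ[ℂ] ℂ => f w) h2
          simpa [LinearMap.flip_apply] using this⟩
      · rintro ⟨h1, h2⟩
        exact ⟨LinearMap.ext h1, LinearMap.ext fun w => by
          simpa [LinearMap.flip_apply] using h2 w⟩
    -- the deviation from additivity/homogeneity of φ lands in N
    have hadd : ∀ u v : E, φ (u + v) - φ u - φ v ∈ N := by
      intro u v
      rw [hNmem]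
      constructor
      · intro w
        obtain ⟨w', rfl⟩ := φ.surjective w
        simp only [map_sub, LinearMap.sub_apply, ← hφ, map_add, LinearMap.add_apply]
        ring
      · intro w
        obtain ⟨w', rfl⟩ := φ.surjective w
        simp only [map_sub, ← hφ, map_add]
        ring
    have hsmul : ∀ (c : ℂ) (u : E), φ (c • u) - c • φ u ∈ N := by
      intro c u
      rw [hNmem]
      constructor
      · intro w
        obtain ⟨w', rfl⟩ := φ.surjective w
        simp only [map_sub, LinearMap.sub_apply, map_smul, LinearMap.smul_apply, ← hφ]
        simp
      · intro w
        obtain ⟨w', rfl⟩ := φ.surjective w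
        simp only [map_sub, map_smul, ← hφ]
        simp
    -- complement C of N and projection p onto C along N
    obtain ⟨C, hC⟩ := Submodule.exists_isCompl N
    set p : E →ₗ[ℂ] E := C.subtype ∘ₗ C.projectionOnto N hC.symm with hpdef
    have hpN : ∀ x ∈ N, p x = 0 := by
      intro x hx
      simp [hpdef, Submodule.projectionOnto_apply_of_mem_right hC.symm hx]
    have hpC : ∀ x : E, p x ∈ C := by
      intro x
      simp only [hpdef, LinearMap.comp_apply, Submodule.subtype_apply]
      exact Submodule.coe_mem _
    have hpCid : ∀ x ∈ C, p x = x := by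
      intro x hx
      simp only [hpdef, LinearMap.comp_apply, Submodule.subtype_apply]
      exact congrArg Subtype.val
        (Submodule.linearProjOfIsCompl_apply_left hC.symm ⟨x, hx⟩)
    have hpsub : ∀ x : E, x - p x ∈ N := by
      intro x
      have h := Submodule.projection_add_projection_eq_self hC x
      simp only [Submodule.projection_apply] at h
      have h2 : x - p x = ((N.projectionOnto C hC) x : E) := by
        simp only [hpdef, LinearMap.comp_apply, Submodule.subtype_apply]
        linear_combination -h
      rw [h2]; exact Submodule.coe_mem _
    -- the linearized map ψ₀ = p ∘ φ
    set ψ₀ : E →ₗ[ℂ] E :=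
      { toFun := fun u => p (φ u)
        map_add' := by
          intro u v
          have h := hpN _ (hadd u v)
          simp only [map_sub] at h
          rw [sub_sub, sub_eq_zero] at h
          exact h
        map_smul' := by
          intro c u
          have h := hpN _ (hsmul c u)
          simp only [map_sub, map_smul] at h
          simpa [sub_eq_zero] using h } with hψ₀def
    have hψ₀app : ∀ u : E, ψ₀ u = p (φ u) := fun u => rfl
    -- B (ψ₀ u) (ψ₀ v) = A u v
    have hB0 : ∀ u v : E, B (ψ₀ u) (ψ₀ v) = A u v := by
      intro u v
      have h1 := hNmem _ |>.mp (hpsub (φ u))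
      have h2 := hNmem _ |>.mp (hpsub (φ v))
      have e1 : B (ψ₀ u) (ψ₀ v) = B (φ u) (ψ₀ v) := by
        have h := h1.1 (ψ₀ v)
        simp only [map_sub, LinearMap.sub_apply] at h
        rw [hψ₀app u]
        exact (sub_eq_zero.mp h).symm
      have e2 : B (φ u) (ψ₀ v) = B (φ u) (φ v) := by
        have h := h2.2 (φ u)
        simp only [map_sub] at h
        rw [hψ₀app v]
        exact (sub_eq_zero.mp h).symm
      rw [e1, e2, ← hφ]
    -- range of ψ₀ is C
    have hrange : LinearMap.range ψ₀ = C := by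
      apply le_antisymm
      · rintro _ ⟨u, rfl⟩; exact hpC _
      · intro c hc
        obtain ⟨u, hu⟩ := φ.surjective c
        exact ⟨u, by rw [hψ₀app, hu, hpCid c hc]⟩
    -- dimension count: ker ψ₀ ≃ N
    set K := LinearMap.ker ψ₀ with hKdef
    have hdim : Module.finrank ℂ K = Module.finrank ℂ N := by
      have h1 := LinearMap.finrank_range_add_finrank_ker ψ₀
      rw [hrange] at h1
      have h2 : Module.finrank ℂ N + Module.finrank ℂ C = Module.finrank ℂ E :=
        Submodule.finrank_add_eq_of_isCompl hC
      rw [show Module.finrank ℂ E = Module.finrank ℂ (Fin n → ℂ) from rfl] at h1 h2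
      rw [← hKdef] at h1
      omega
    have θ : K ≃ₗ[ℂ] N := LinearEquiv.ofFinrankEq _ _ hdim
    obtain ⟨W, hW⟩ := Submodule.exists_isCompl K
    set projK : E →ₗ[ℂ] K := K.linearProjOfIsCompl W hW with hprojK
    set ψlin : E →ₗ[ℂ] E := ψ₀ + N.subtype ∘ₗ (θ : K →ₗ[ℂ] N) ∘ₗ projK with hψlin
    have hψapp : ∀ x : E, ψlin x = ψ₀ x + (θ (projK x) : E) := fun x => rfl
    have hψN : ∀ x : E, ψlin x - ψ₀ x ∈ N := by
      intro x
      rw [hψapp]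
      simpa using (θ (projK x)).2
    have hinj : Function.Injective ψlin := by
      rw [← LinearMap.ker_eq_bot]
      rw [Submodule.eq_bot_iff]
      intro x hx
      rw [LinearMap.mem_ker, hψapp] at hx
      have hmemC : ψ₀ x ∈ C := hrange ▸ LinearMap.mem_range_self ψ₀ x
      have hmemN : (θ (projK x) : E) ∈ N := (θ (projK x)).2
      have hψ0x : ψ₀ x = 0 := by
        have : ψ₀ x ∈ N ⊓ C := by
          constructor
          · have : ψ₀ x = -(θ (projK x) : E) := by linear_combination hx
            rw [this]; exact N.neg_mem hmemN
          · exact hmemC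
        rw [hC.inf_eq_bot] at this
        simpa using this
      have hxK : x ∈ K := LinearMap.mem_ker.mpr hψ0x
      have hθ0 : (θ (projK x) : E) = 0 := by linear_combination hx - hψ0x
      have : θ (projK x) = 0 := Subtype.ext hθ0
      have : projK x = 0 := θ.injective (by simpa using this)
      have hxx : projK x = ⟨x, hxK⟩ :=
        Submodule.linearProjOfIsCompl_apply_left hW ⟨x, hxK⟩
      rw [hxx] at this
      exact congrArg Subtype.val this
    have hbij : Function.Bijective ψlin :=
      ⟨hinj, LinearMap.injective_iff_surjective.mp hinj⟩
    refine ⟨LinearEquiv.ofBijective ψlin hbij, ?_⟩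
    intro u v
    have h1 := hNmem _ |>.mp (hψN u)
    have h2 := hNmem _ |>.mp (hψN v)
    have e1 : B (ψlin u) (ψlin v) = B (ψ₀ u) (ψlin v) := by
      have h := h1.1 (ψlin v)
      simp only [map_sub, LinearMap.sub_apply] at h
      exact sub_eq_zero.mp h
    have e2 : B (ψ₀ u) (ψlin v) = B (ψ₀ u) (ψ₀ v) := by
      have h := h2.2 (ψ₀ u)
      simp only [map_sub] at h
      exact sub_eq_zero.mp h
    show A u v = B (ψlin u) (ψlin v)
    rw [e1, e2, hB0]
  · rintro ⟨ψ, hψ⟩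
    exact ⟨ψ.toContinuousLinearEquiv.toHomeomorph, hψ⟩
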